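/- For weights w_b > w_a > 0 and normalized noise powers η_b ≥ η_a > 0, define c₁ = (w_b·η_a − w_a·η_b)/(w_a − w_b) and c₂ = (√w_b·η_a − √w_a·η_b)/(√w_a − √w_b). Then c₂ ≥ c₁; i.e. the inflection point of f lies to the right of its maximizer. -/
import Mathlib


/-- For weights `w_b > w_a > 0` and noise powers `η_b ≥ η_a > 0`, the inflection point
`c₂ = (√w_b·η_a − √w_a·η_b)/(√w_a − √w_b)` lies to the right of the maximizer
`c₁ = (w_b·η_a − w_a·η_b)/(w_a − w_b)`, i.e. `c₂ ≥ c₁`. -/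
theorem stmt_4
    (wa wb ηa ηb : ℝ) (hwa : 0 < wa) (hwab : wa < wb)
    (hηa : 0 < ηa) (hηab : ηa ≤ ηb)
    (c₁ c₂ : ℝ)
    (hc₁ : c₁ = (wb * ηa - wa * ηb) / (wa - wb))
    (hc₂ : c₂ = (Real.sqrt wb * ηa - Real.sqrt wa * ηb) / (Real.sqrt wa - Real.sqrt wb)) :
    c₁ ≤ c₂ := by
  set a := Real.sqrt wa with ha
  set b := Real.sqrt wb with hb
  have ha2 : a ^ 2 = wa := Real.sq_sqrt hwa.le
  have hb2 : b ^ 2 = wb := Real.sq_sqrt (hwa.trans hwab).le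
  have ha0 : 0 < a := Real.sqrt_pos.mpr hwa
  have hab : a < b := Real.sqrt_lt_sqrt hwa.le hwab
  have h1 : c₁ = (wa * ηb - wb * ηa) / (wb - wa) := by
    rw [hc₁]; rw [div_eq_div_iff (by linarith) (by linarith)]; ring
  have h2 : c₂ = (a * ηb - b * ηa) / (b - a) := by
    rw [hc₂]; rw [div_eq_div_iff (by linarith) (by linarith)]; ring
  rw [h1, h2, ← ha2, ← hb2, div_le_div_iff₀ (by linarith) (by linarith)]
  nlinarith [mul_nonneg (mul_nonneg (mul_nonneg ha0.le (ha0.trans hab).le) (sub_nonneg.mpr hab.le)) (sub_nonneg.mpr hηab), ha2, hb2]
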